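/- Let f : (0,∞) → (0,∞) be a measurable log-convex function and let a > 0. Assume that for every x > 0 the integral F(x) := ∫_0^∞ e^{-ay} f(x + y) dy converges and is positive and finite. Then F is log-convex on (0,∞). -/
import Mathlib

open Real Set MeasureTheory

/-- If f : (0,∞) → (0,∞) is measurable and log-convex and a > 0, and if for every x > 0
the integral F(x) = ∫_0^∞ e^{-ay} f(x+y) dy converges and is positive and finite,
then F is log-convex on (0,∞). -/
theorem stmt_4 (f : ℝ → ℝ) (hfm : Measurable f)
    (hfpos : ∀ x > (0:ℝ), 0 < f x)
    (hflc : ConvexOn ℝ (Set.Ioi 0) (fun x => Real.log (f x)))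
    (a : ℝ) (ha : 0 < a)
    (hint : ∀ x > (0:ℝ),
      IntegrableOn (fun y => Real.exp (-a * y) * f (x + y)) (Set.Ioi 0))
    (hFpos : ∀ x > (0:ℝ),
      0 < ∫ y in Set.Ioi (0:ℝ), Real.exp (-a * y) * f (x + y)) :
    ConvexOn ℝ (Set.Ioi 0)
      (fun x => Real.log (∫ y in Set.Ioi (0:ℝ), Real.exp (-a * y) * f (x + y))) := by
  set F : ℝ → ℝ := fun x => ∫ y in Set.Ioi (0:ℝ), Real.exp (-a * y) * f (x + y) with hF
  -- key inequality
  have key : ∀ x ∈ Set.Ioi (0:ℝ), ∀ z ∈ Set.Ioi (0:ℝ), ∀ t s : ℝ, 0 < t → 0 < s →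
      t + s = 1 → F (t * x + s * z) ≤ F x ^ t * F z ^ s := by
    intro x hx z hz t s ht hs hts
    have hx' : (0:ℝ) < x := hx
    have hz' : (0:ℝ) < z := hz
    have hc : (0:ℝ) < t * x + s * z := by positivity
    -- nonnegativity a.e. of integrands
    have hnonneg : ∀ w : ℝ, 0 < w → (0:ℝ→ℝ) ≤ᵐ[volume.restrict (Set.Ioi 0)]
        fun y => Real.exp (-a * y) * f (w + y) := by
      intro w hw
      filter_upwards [ae_restrict_mem measurableSet_Ioi] with y hy
      exact le_of_lt (mul_pos (Real.exp_pos _) (hfpos _ (by linarith [mem_Ioi.mp hy])))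
    -- lintegral versions
    have hofReal : ∀ w : ℝ, 0 < w →
        ENNReal.ofReal (F w) =
          ∫⁻ y in Set.Ioi (0:ℝ), ENNReal.ofReal (Real.exp (-a * y) * f (w + y)) := by
      intro w hw
      exact MeasureTheory.ofReal_integral_eq_lintegral_ofReal (hint w hw) (hnonneg w hw)
    -- pointwise inequality
    have hptwise : ∀ y : ℝ, 0 < y →
        ENNReal.ofReal (Real.exp (-a * y) * f (t * x + s * z + y)) ≤
          (ENNReal.ofReal (Real.exp (-a * y) * f (x + y))) ^ t *
          (ENNReal.ofReal (Real.exp (-a * y) * f (z + y))) ^ s := by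
      intro y hy
      have hxy : (0:ℝ) < x + y := by linarith
      have hzy : (0:ℝ) < z + y := by linarith
      have hfx := hfpos _ hxy
      have hfz := hfpos _ hzy
      have hcomb : t * x + s * z + y = t * (x + y) + s * (z + y) := by rw [show t = 1 - s by linarith]; ring
      have hlog := hflc.2 (mem_Ioi.mpr hxy) (mem_Ioi.mpr hzy) ht.le hs.le hts
      simp only [smul_eq_mul] at hlog
      have hfc : f (t * x + s * z + y) ≤ f (x + y) ^ t * f (z + y) ^ s := by
        rw [hcomb]
        have hpos := hfpos _ (show (0:ℝ) < t * (x+y) + s * (z+y) by positivity)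
        calc f (t * (x + y) + s * (z + y))
            = Real.exp (Real.log (f (t * (x+y) + s * (z+y)))) := (Real.exp_log hpos).symm
          _ ≤ Real.exp (t * Real.log (f (x+y)) + s * Real.log (f (z+y))) :=
              Real.exp_le_exp.mpr hlog
          _ = f (x + y) ^ t * f (z + y) ^ s := by
              rw [Real.exp_add, Real.rpow_def_of_pos hfx, Real.rpow_def_of_pos hfz,
                mul_comm t, mul_comm s]
      have hexp : Real.exp (-a * y) = Real.exp (-a * y) ^ t * Real.exp (-a * y) ^ s := by
        rw [← Real.rpow_add (Real.exp_pos _), hts, Real.rpow_one]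
      have hreal : Real.exp (-a * y) * f (t * x + s * z + y) ≤
          (Real.exp (-a * y) * f (x + y)) ^ t * (Real.exp (-a * y) * f (z + y)) ^ s := by
        rw [Real.mul_rpow (Real.exp_pos _).le hfx.le, Real.mul_rpow (Real.exp_pos _).le hfz.le]
        calc Real.exp (-a * y) * f (t * x + s * z + y)
            ≤ Real.exp (-a * y) * (f (x + y) ^ t * f (z + y) ^ s) := by
              exact mul_le_mul_of_nonneg_left hfc (Real.exp_pos _).le
          _ = Real.exp (-a*y) ^ t * f (x + y) ^ t * (Real.exp (-a*y) ^ s * f (z + y) ^ s) := by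
              nth_rewrite 1 [hexp]; ring
      calc ENNReal.ofReal (Real.exp (-a * y) * f (t * x + s * z + y))
          ≤ ENNReal.ofReal ((Real.exp (-a * y) * f (x + y)) ^ t *
              (Real.exp (-a * y) * f (z + y)) ^ s) := ENNReal.ofReal_le_ofReal hreal
        _ = (ENNReal.ofReal (Real.exp (-a * y) * f (x + y))) ^ t *
            (ENNReal.ofReal (Real.exp (-a * y) * f (z + y))) ^ s := by
            rw [ENNReal.ofReal_mul (by positivity),
              ← ENNReal.ofReal_rpow_of_pos (by positivity),
              ← ENNReal.ofReal_rpow_of_pos (by positivity)]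
    -- measurability
    have hmeas : ∀ w : ℝ, Measurable fun y =>
        ENNReal.ofReal (Real.exp (-a * y) * f (w + y)) := by
      intro w
      exact ENNReal.measurable_ofReal.comp
        ((Real.measurable_exp.comp (measurable_const.mul measurable_id)).mul
          (hfm.comp (measurable_const.add measurable_id)))
    -- Hölder
    have hHolder :
        (∫⁻ y in Set.Ioi (0:ℝ), ENNReal.ofReal (Real.exp (-a * y) * f (t * x + s * z + y))) ≤
        (∫⁻ y in Set.Ioi (0:ℝ), ENNReal.ofReal (Real.exp (-a * y) * f (x + y))) ^ t *
        (∫⁻ y in Set.Ioi (0:ℝ), ENNReal.ofReal (Real.exp (-a * y) * f (z + y))) ^ s := by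
      have h1 : (∫⁻ y in Set.Ioi (0:ℝ),
          ENNReal.ofReal (Real.exp (-a * y) * f (t * x + s * z + y))) ≤
          ∫⁻ y in Set.Ioi (0:ℝ),
            (ENNReal.ofReal (Real.exp (-a * y) * f (x + y))) ^ t *
            (ENNReal.ofReal (Real.exp (-a * y) * f (z + y))) ^ s := by
        refine lintegral_mono_ae ?_
        filter_upwards [ae_restrict_mem measurableSet_Ioi] with y hy
        exact hptwise y hy
      exact h1.trans (ENNReal.lintegral_mul_norm_pow_le (hmeas x).aemeasurable
        (hmeas z).aemeasurable ht.le hs.le hts)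
    -- back to reals
    have hFx := hFpos x hx'
    have hFz := hFpos z hz'
    have hineq : ENNReal.ofReal (F (t * x + s * z)) ≤
        ENNReal.ofReal (F x ^ t * F z ^ s) := by
      rw [hofReal _ hc, ENNReal.ofReal_mul (by positivity),
        ← ENNReal.ofReal_rpow_of_pos hFx, ← ENNReal.ofReal_rpow_of_pos hFz,
        hofReal _ hx', hofReal _ hz']
      exact hHolder
    exact (ENNReal.ofReal_le_ofReal_iff (by positivity)).mp hineq
  -- assemble convexity
  refine ⟨convex_Ioi 0, ?_⟩
  intro x hx z hz t s ht hs hts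
  simp only [smul_eq_mul]
  rcases eq_or_lt_of_le ht with h0 | ht'
  · have hs1 : s = 1 := by linarith
    simp [← h0, hs1]
  rcases eq_or_lt_of_le hs with h0 | hs'
  · have ht1 : t = 1 := by linarith
    simp [← h0, ht1]
  have hx' : (0:ℝ) < x := hx
  have hz' : (0:ℝ) < z := hz
  have hc : (0:ℝ) < t * x + s * z := by positivity
  have hkey := key x hx z hz t s ht' hs' hts
  calc Real.log (F (t * x + s * z)) ≤ Real.log (F x ^ t * F z ^ s) :=
        Real.log_le_log (hFpos _ hc) hkey
    _ = t * Real.log (F x) + s * Real.log (F z) := by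
        rw [Real.log_mul (Real.rpow_pos_of_pos (hFpos x hx') t).ne' (Real.rpow_pos_of_pos (hFpos z hz') s).ne',
          Real.log_rpow (hFpos x hx'), Real.log_rpow (hFpos z hz')]
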